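/- Fix μ* = 0.107 and let (x^s, p_m^s) be the maximal-payment mechanism defined from μ* (with parameters δ, λ₀, λ₁, ν̲, ν̄, ν★, τ, ν°, ν', ν'' computed at μ*). For every μ ∈ (0, 0.107): (i) the worst-case expected payment of (x^s, p_m^s) satisfies inf over P ∈ P_μ of ∫ p_m^s dP = μ·x^s(μ) if μ ∈ (0, ν̲], and = λ₁μ + λ₀ if μ ∈ [ν̲, μ*]; and (ii) the optimal worst-case revenue satisfies z*(μ) ≤ b(μ) := min{ μ/(2−μ), (μ/3)(√(μ/(3−μ)) + 1)² }. Hence, writing z_{μ*} for the value in (i), the mechanism satisfies z_{μ*} ≥ (z_{μ*}/b(μ))·z*(μ) and z_{μ*} ≥ z*(μ) − (b(μ) − z_{μ*}). -/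

import Mathlib

open MeasureTheory Set

noncomputable section

/-- A Borel probability measure on ℝ supported on `[0,1]`. -/
def IsDistOn01 (P : Measure ℝ) : Prop :=
  IsProbabilityMeasure P ∧ P (Set.Icc (0:ℝ) 1)ᶜ = 0

/-- Membership in the first-moment ambiguity set `P_μ`. -/
def MemAmb (μ : ℝ) (P : Measure ℝ) : Prop :=
  IsDistOn01 P ∧ ∫ ν, ν ∂P = μ

/-- A feasible single-agent mechanism. -/
structure Feasible (x p : ℝ → ℝ) : Prop where
  meas_x : Measurable x
  meas_p : Measurable p
  x_mem : ∀ ν ∈ Set.Icc (0:ℝ) 1, x ν ∈ Set.Icc (0:ℝ) 1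
  ic : ∀ ν ∈ Set.Icc (0:ℝ) 1, ∀ νh ∈ Set.Icc (0:ℝ) 1, p ν ≤ ν * (x ν - x νh) + νh
  ir : ∀ ν ∈ Set.Icc (0:ℝ) 1, p ν ≤ ν * x ν

/-- Worst-case expected payment of a payment rule `p` over the ambiguity set `P_μ`. -/
def worstCase (μ : ℝ) (p : ℝ → ℝ) : ℝ :=
  sInf {v : ℝ | ∃ P : Measure ℝ, MemAmb μ P ∧ v = ∫ ν, p ν ∂P}

/-- The seller's optimal worst-case revenue `z*(μ)`. -/
def zStar (μ : ℝ) : ℝ :=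
  sSup {z : ℝ | ∃ x p : ℝ → ℝ, Feasible x p ∧ z = worstCase μ p}

/-- `δ = μ/(3-μ)`. -/
def del (μ : ℝ) : ℝ := μ/(3-μ)

/-- `λ₀ = −δ√δ(√δ + 1)`. -/
def l0 (μ : ℝ) : ℝ := -(del μ * Real.sqrt (del μ) * (Real.sqrt (del μ) + 1))

/-- `λ₁ = (√δ + 1)²/3 − λ₀/μ`. -/
def l1 (μ : ℝ) : ℝ := (Real.sqrt (del μ) + 1)^2/3 - l0 μ/μ

/-- `ν̲ = −2λ₀/λ₁`. -/
def nLow (μ : ℝ) : ℝ := -2*l0 μ/l1 μ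

/-- `ν̄ = λ₁ + λ₀`. -/
def nBar (μ : ℝ) : ℝ := l1 μ + l0 μ

/-- `ν★ = 2 − λ₁ − 2√(1 − ν̄)`. -/
def nStar (μ : ℝ) : ℝ := 2 - l1 μ - 2*Real.sqrt (1 - nBar μ)

/-- `τ = λ₁ − ν★ + ν̄ − 1`. -/
def tauP (μ : ℝ) : ℝ := l1 μ - nStar μ + nBar μ - 1

/-- `ν° = (−λ₀ − √(λ₀² + τλ₀ν★))/τ`. -/
def nCirc (μ : ℝ) : ℝ :=
  (-l0 μ - Real.sqrt ((l0 μ)^2 + tauP μ * l0 μ * nStar μ))/tauP μ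

/-- The allocation rule `x^s`. -/
def xs (μ ν : ℝ) : ℝ :=
  if ν ≤ nLow μ then -(l0 μ/(nLow μ)^2) * ν
  else if ν ≤ nCirc μ then l1 μ + l0 μ/ν
  else if ν ≤ nStar μ then -(l0 μ/(nCirc μ)^2) * ν + l1 μ + 2*l0 μ/nCirc μ
  else if ν ≤ nBar μ then ν - nBar μ + 1
  else 1

/-- The linear payment rule `p^s(ν) = λ₁ν + λ₀`. -/
def ps (μ ν : ℝ) : ℝ := l1 μ * ν + l0 μ

/-- `ν' = −ν̲²/λ₀`. -/
def nP (μ : ℝ) : ℝ := -(nLow μ)^2/l0 μ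

/-- `ν'' = −ν°²/λ₀`. -/
def nPP (μ : ℝ) : ℝ := -(nCirc μ)^2/l0 μ

/-- The maximal payment rule `p_m^s`. -/
def pms (μ ν : ℝ) : ℝ :=
  if ν ≤ nP μ then ν * xs μ ν
  else if ν ≤ nPP μ then ν*(ν - nBar μ + 1 - l1 μ) + 2*Real.sqrt (-(l0 μ)*ν)
  else if ν ≤ nBar μ then ν*(ν - nStar μ) + nStar μ
  else ν*(nBar μ - nStar μ) + nStar μ

/-- The upper bound `b(μ) = min{ μ/(2−μ), (μ/3)(√(μ/(3−μ)) + 1)² }`. -/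
def bBound (μ : ℝ) : ℝ :=
  min (μ/(2-μ)) ((μ/3)*(Real.sqrt (μ/(3-μ)) + 1)^2)

set_option maxHeartbeats 1000000

namespace AppMech
noncomputable def SS : ℝ := Real.sqrt (del 0.107)
noncomputable def uu : ℝ := Real.sqrt (1 - nBar 0.107)

lemma hdel : del 0.107 = 107/2893 := by norm_num [del]
lemma hS0 : 0 < SS := Real.sqrt_pos.2 (by rw [hdel]; norm_num)
lemma hS2 : SS^2 = 107/2893 := by rw [SS, Real.sq_sqrt (by rw [hdel]; norm_num : (0:ℝ) ≤ del 0.107), hdel]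
lemma hSl : 0.19231699 < SS := by nlinarith [hS2, hS0]
lemma hSu : SS < 0.192317 := by nlinarith [hS2, hS0]
lemma hdS : del 0.107 = SS^2 := by rw [hS2, hdel]

lemma hl0 : l0 0.107 = -(SS^4 + SS^3) := by
  have h : l0 0.107 = -(del 0.107 * SS * (SS+1)) := rfl
  rw [h, hdS]; ring
lemma hl1 : l1 0.107 = (SS+1)*(SS^3+2*SS+1)/3 := by
  have h : l1 0.107 = (SS+1)^2/3 - l0 0.107/0.107 := rfl
  rw [h, hl0]
  have h2 := hS2
  field_simp
  nlinarith [hS2, hS0]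
lemma hl0b : -0.0084810 < l0 0.107 ∧ l0 0.107 < -0.0084809 := by
  rw [hl0]; constructor <;> nlinarith [hS2, hSl, hSu, hS0]
lemma hl1b : 0.5531345 < l1 0.107 ∧ l1 0.107 < 0.5531346 := by
  rw [hl1]; constructor <;> nlinarith [hS2, hSl, hSu, hS0]
lemma hl0neg : l0 0.107 < 0 := hl0b.2.trans_le (by norm_num)
lemma hl1pos : 0 < l1 0.107 := lt_trans (by norm_num) hl1b.1
lemma hK : 3*l1 0.107 + l0 0.107 - 1 = 2*SS^2 + 3*SS := by rw [hl0, hl1]; ring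
lemma hnBarb : 0.5446535 < nBar 0.107 ∧ nBar 0.107 < 0.5446537 := by
  rw [nBar]; constructor <;> linarith [hl0b.1, hl0b.2, hl1b.1, hl1b.2]
lemma hnBar1 : nBar 0.107 ≤ 1 := by linarith [hnBarb.2]
lemma hu0 : 0 ≤ uu := Real.sqrt_nonneg _
lemma hu2 : uu^2 = 1 - nBar 0.107 := Real.sq_sqrt (by linarith [hnBarb.2])
lemma hub : 0.6747935 < uu ∧ uu < 0.6747937 := by
  constructor <;> nlinarith [hu2, hu0, hnBarb.1, hnBarb.2]
lemma hnStar : nStar 0.107 = 2 - l1 0.107 - 2*uu := rfl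
lemma hnStarb : 0.09727 < nStar 0.107 ∧ nStar 0.107 < 0.09729 := by
  rw [hnStar]; constructor <;> linarith [hub.1, hub.2, hl1b.1, hl1b.2]
lemma htau : tauP 0.107 = 2*SS^2 + 3*SS - 2 + 2*uu := by
  rw [tauP, hnStar, nBar]; linarith [hK]
lemma htaub : 0.0005 < tauP 0.107 ∧ tauP 0.107 < 0.00052 := by
  rw [htau]; constructor <;> nlinarith [hS2, hSl, hSu, hub.1, hub.2]
lemma hnLowe : nLow 0.107 * l1 0.107 = -2 * l0 0.107 := by
  rw [nLow, div_mul_cancel₀ _ hl1pos.ne']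
lemma hnLowb : 0.030664 < nLow 0.107 ∧ nLow 0.107 < 0.030666 := by
  constructor <;> nlinarith [hnLowe, hl0b.1, hl0b.2, hl1b.1, hl1b.2]
lemma hrad : (0:ℝ) ≤ (l0 0.107)^2 + tauP 0.107 * l0 0.107 * nStar 0.107 := by
  have h1 : tauP 0.107 * nStar 0.107 ≤ 0.0000506 := by nlinarith [htaub.1, htaub.2, hnStarb.1, hnStarb.2]
  have h2 : (0:ℝ) ≤ tauP 0.107 * nStar 0.107 := by nlinarith [htaub.1, hnStarb.1]
  have h3 : (-l0 0.107) * (tauP 0.107 * nStar 0.107) ≤ 0.0084810 * 0.0000506 :=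
    mul_le_mul (by linarith [hl0b.1]) h1 h2 (by norm_num)
  nlinarith [hl0b.1, hl0b.2]
lemma hnCirc_ge : nStar 0.107/2 ≤ nCirc 0.107 := by
  have h1 : Real.sqrt ((l0 0.107)^2 + tauP 0.107 * l0 0.107 * nStar 0.107)
      ≤ -l0 0.107 - tauP 0.107 * nStar 0.107/2 := by
    have h2 : (l0 0.107)^2 + tauP 0.107 * l0 0.107 * nStar 0.107
        ≤ (-l0 0.107 - tauP 0.107 * nStar 0.107/2)^2 := by nlinarith [sq_nonneg (tauP 0.107 * nStar 0.107)]
    calc Real.sqrt _ ≤ Real.sqrt ((-l0 0.107 - tauP 0.107 * nStar 0.107/2)^2) := Real.sqrt_le_sqrt h2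
    _ = _ := by
        rw [Real.sqrt_sq]
        nlinarith [hl0b.2, htaub.1, htaub.2, hnStarb.1, hnStarb.2]
  rw [nCirc, le_div_iff₀ (by linarith [htaub.1] : (0:ℝ) < tauP 0.107)]
  nlinarith [h1]
lemma hnCircb : 0.0486 < nCirc 0.107 := by
  calc (0.0486:ℝ) < nStar 0.107/2 := by linarith [hnStarb.1]
  _ ≤ _ := hnCirc_ge
lemma hnPb : nP 0.107 < 0.1109 ∧ nLow 0.107 ≤ nP 0.107 := by
  have he : nP 0.107 * (-l0 0.107) = (nLow 0.107)^2 := by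
    rw [nP]; field_simp [hl0neg.ne]
  constructor
  · nlinarith [hnLowb.1, hnLowb.2, hl0b.1, hl0b.2]
  · nlinarith [hnLowb.1, hnLowb.2, hl0b.1, hl0b.2]
lemma hnPPb : 0.2294 < nPP 0.107 := by
  have he : nPP 0.107 * (-l0 0.107) = (nCirc 0.107)^2 := by
    rw [nPP]; field_simp [hl0neg.ne]
  nlinarith [hnCircb, hl0b.1, hl0b.2, hnPb.1]
lemma hnu0b : 0.2293 < SS^2 + SS ∧ SS^2 + SS < 0.2294 := by
  constructor <;> nlinarith [hS2, hSl, hSu]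
lemma hdisc : (nBar 0.107 + l1 0.107 - 1)^2 ≤ 4*(-l0 0.107) := by
  nlinarith [hnBarb.1, hnBarb.2, hl1b.1, hl1b.2, hl0b.2]
end AppMech
namespace AppMech
noncomputable def TT : ℝ := Real.sqrt (SS^2+SS)
lemma hT0 : 0 ≤ TT := Real.sqrt_nonneg _
lemma hT2 : TT^2 = SS^2+SS := Real.sq_sqrt (by nlinarith [hS0, hS2])
lemma hsl0 : Real.sqrt (-(l0 0.107)) = SS*TT := by
  rw [show -(l0 0.107) = (SS*TT)^2 by rw [hl0]; linear_combination (-(SS^2) : ℝ) * hT2]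
  exact Real.sqrt_sq (mul_nonneg hS0.le hT0)
lemma hnBarE : nBar 0.107 = l1 0.107 + l0 0.107 := rfl
lemma hnStarE : nStar 0.107 = 2 - l1 0.107 - 2*uu := rfl
lemma hu2' : uu^2 = 1 - l1 0.107 - l0 0.107 := by rw [hu2, hnBarE]; ring
lemma hL0 : (0:ℝ) < nLow 0.107 := by linarith [hnLowb.1]
lemma hl1' : l1 0.107 = -2*l0 0.107/nLow 0.107 := by
  rw [eq_div_iff hL0.ne']; linarith [hnLowe]

lemma pms_ge_line (ν : ℝ) (h0 : 0 ≤ ν) (h1 : ν ≤ 1) :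
    l1 0.107 * ν + l0 0.107 ≤ pms 0.107 ν := by
  rw [pms]
  by_cases hb1 : ν ≤ nP 0.107
  · rw [if_pos hb1, xs]
    by_cases hx1 : ν ≤ nLow 0.107
    · rw [if_pos hx1]
      have key : ν * (-(l0 0.107/(nLow 0.107)^2) * ν) - (l1 0.107 * ν + l0 0.107)
          = (-(l0 0.107))*(ν - nLow 0.107)^2/(nLow 0.107)^2 := by
        rw [hl1']; field_simp [hL0.ne']; ring
      have h2 : (0:ℝ) ≤ (-(l0 0.107))*(ν - nLow 0.107)^2/(nLow 0.107)^2 :=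
        div_nonneg (mul_nonneg (by linarith [hl0neg]) (sq_nonneg _)) (sq_nonneg _)
      linarith
    · rw [if_neg hx1]
      push_neg at hx1
      have hν0' : (0:ℝ) < ν := lt_trans hL0 hx1
      by_cases hx2 : ν ≤ nCirc 0.107
      · rw [if_pos hx2]
        have heq : ν * (l1 0.107 + l0 0.107/ν) = l1 0.107 * ν + l0 0.107 := by
          field_simp
        exact heq.ge
      · rw [if_neg hx2]
        by_cases hx3 : ν ≤ nStar 0.107
        · rw [if_pos hx3]
          have hnC0 : (0:ℝ) < nCirc 0.107 := by linarith [hnCircb]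
          have key : ν * (-(l0 0.107/(nCirc 0.107)^2) * ν + l1 0.107 + 2*l0 0.107/nCirc 0.107)
              - (l1 0.107 * ν + l0 0.107)
              = (-(l0 0.107))*(ν - nCirc 0.107)^2/(nCirc 0.107)^2 := by
            field_simp; ring
          have h2 : (0:ℝ) ≤ (-(l0 0.107))*(ν - nCirc 0.107)^2/(nCirc 0.107)^2 :=
            div_nonneg (mul_nonneg (by linarith [hl0neg]) (sq_nonneg _)) (sq_nonneg _)
          linarith
        · rw [if_neg hx3]
          by_cases hx4 : ν ≤ nBar 0.107
          · rw [if_pos hx4]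
            nlinarith [hdisc, sq_nonneg (ν - (nBar 0.107 + l1 0.107 - 1)/2)]
          · rw [if_neg hx4]
            nlinarith [hl1b.2, hl0neg, h0, h1]
  · rw [if_neg hb1]
    push_neg at hb1
    by_cases hb2 : ν ≤ nPP 0.107
    · rw [if_pos hb2]
      rw [Real.sqrt_mul (by linarith [hl0neg] : (0:ℝ) ≤ -(l0 0.107)) ν, hsl0]
      set t := Real.sqrt ν with htdef
      have ht2 : t^2 = ν := Real.sq_sqrt h0
      have ht0 : 0 ≤ t := Real.sqrt_nonneg _
      rw [← ht2]
      have key : t^2*(t^2 - nBar 0.107 + 1 - l1 0.107) + 2*(SS*TT*t) - (l1 0.107*t^2 + l0 0.107)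
          = (t - TT)^2 * (t^2 + 2*TT*t + SS^2) := by
        rw [hnBarE]
        linear_combination (3*t^2 - 2*TT*t - SS^2) * hT2 - t^2 * hK - hl0
      have pos2 : (0:ℝ) ≤ t^2 + 2*TT*t + SS^2 := by nlinarith [mul_nonneg hT0 ht0, sq_nonneg t, sq_nonneg SS]
      nlinarith [mul_nonneg (sq_nonneg (t - TT)) pos2]
    · rw [if_neg hb2]
      by_cases hb3 : ν ≤ nBar 0.107
      · rw [if_pos hb3]
        have key : ν*(ν - nStar 0.107) + nStar 0.107 - (l1 0.107 * ν + l0 0.107)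
            = (ν - (1 - uu))^2 := by
          rw [hnStarE]; linear_combination -hu2'
        nlinarith [sq_nonneg (ν - (1 - uu))]
      · rw [if_neg hb3]
        have key : ν*(nBar 0.107 - nStar 0.107) + nStar 0.107 - (l1 0.107 * ν + l0 0.107)
            = (1 - uu)^2*(1 - ν) := by
          rw [hnStarE, hnBarE]; linear_combination (ν - 1) * hu2'
        nlinarith [mul_nonneg (sq_nonneg (1 - uu)) (by linarith : (0:ℝ) ≤ 1 - ν)]

lemma pms_eval_low (ν : ℝ) (h : ν ≤ nLow 0.107) :
    pms 0.107 ν = -(l0 0.107/(nLow 0.107)^2) * ν^2 := by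
  rw [pms, if_pos (le_trans h hnPb.2), xs, if_pos h]; ring

lemma pms_at_nLow : pms 0.107 (nLow 0.107) = l1 0.107 * nLow 0.107 + l0 0.107 := by
  rw [pms_eval_low _ le_rfl, hl1']
  field_simp [hL0.ne']; ring

lemma pms_at_nu0 : pms 0.107 (SS^2+SS) = l1 0.107 * (SS^2+SS) + l0 0.107 := by
  have hb1 : ¬(SS^2+SS ≤ nP 0.107) := by push_neg; linarith [hnPb.1, hnu0b.1]
  have hb2 : SS^2+SS ≤ nPP 0.107 := by linarith [hnPPb, hnu0b.2]
  rw [pms, if_neg hb1, if_pos hb2,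
    Real.sqrt_mul (by linarith [hl0neg] : (0:ℝ) ≤ -(l0 0.107)) _, hsl0,
    show Real.sqrt (SS^2+SS) = TT from rfl, hnBarE]
  linear_combination (-(SS^2+SS))*hK - hl0 + (2*SS)*hT2

lemma pms_ge_tangent (μm ν : ℝ) (hm0 : 0 ≤ μm) (hm1 : μm ≤ nLow 0.107)
    (h0 : 0 ≤ ν) (h1 : ν ≤ 1) :
    -(l0 0.107/(nLow 0.107)^2) * (2*μm*ν - μm^2) ≤ pms 0.107 ν := by
  have hc0 : 0 ≤ -(l0 0.107/(nLow 0.107)^2) := by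
    have h' : -(l0 0.107/(nLow 0.107)^2) = (-l0 0.107)/(nLow 0.107)^2 := by ring
    rw [h']; exact div_nonneg (by linarith [hl0neg]) (sq_nonneg _)
  rcases le_or_gt ν (nLow 0.107) with hx | hx
  · rw [pms_eval_low ν hx]
    nlinarith [mul_nonneg hc0 (sq_nonneg (ν - μm))]
  · have hline := pms_ge_line ν h0 h1
    have key : l1 0.107 * ν + l0 0.107 - (-(l0 0.107/(nLow 0.107)^2) * (2*μm*ν - μm^2))
        = -(l0 0.107/(nLow 0.107)^2) * ((nLow 0.107 - μm) * (2*ν - nLow 0.107 - μm)) := by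
      rw [hl1']; field_simp [hL0.ne']; ring
    nlinarith [mul_nonneg hc0 (mul_nonneg (by linarith : (0:ℝ) ≤ nLow 0.107 - μm)
      (by linarith : (0:ℝ) ≤ 2*ν - nLow 0.107 - μm))]
end AppMech
namespace AppMech

lemma pms_le_ten (ν : ℝ) (h0 : 0 ≤ ν) (h1 : ν ≤ 1) : pms 0.107 ν ≤ 10 := by
  rw [pms]
  by_cases hb1 : ν ≤ nP 0.107
  · rw [if_pos hb1, xs]
    have hxle : (if ν ≤ nLow 0.107 then -(l0 0.107/(nLow 0.107)^2) * ν
      else if ν ≤ nCirc 0.107 then l1 0.107 + l0 0.107/ν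
      else if ν ≤ nStar 0.107 then -(l0 0.107/(nCirc 0.107)^2) * ν + l1 0.107 + 2*l0 0.107/nCirc 0.107
      else if ν ≤ nBar 0.107 then ν - nBar 0.107 + 1
      else 1) ≤ 10 := by
      by_cases hx1 : ν ≤ nLow 0.107
      · rw [if_pos hx1]
        have hc : -(l0 0.107/(nLow 0.107)^2) * (nLow 0.107)^2 = -(l0 0.107) := by
          field_simp [hL0.ne']
        nlinarith [hl0b.1, hl0b.2, hnLowb.1, hnLowb.2, h0, sq_nonneg (nLow 0.107)]
      · rw [if_neg hx1]; push_neg at hx1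
        by_cases hx2 : ν ≤ nCirc 0.107
        · rw [if_pos hx2]
          have : l0 0.107/ν ≤ 0 := div_nonpos_of_nonpos_of_nonneg hl0neg.le h0
          linarith [hl1b.2]
        · rw [if_neg hx2]
          by_cases hx3 : ν ≤ nStar 0.107
          · rw [if_pos hx3]
            have hnC0 : (0:ℝ) < nCirc 0.107 := by linarith [hnCircb]
            have hc : -(l0 0.107/(nCirc 0.107)^2) * (nCirc 0.107)^2 = -(l0 0.107) := by
              field_simp [hnC0.ne']
            have hd : 2*l0 0.107/nCirc 0.107 ≤ 0 :=
              div_nonpos_of_nonpos_of_nonneg (by linarith [hl0neg]) hnC0.le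
            nlinarith [hl0b.1, hl0b.2, hnCircb, h0, h1, hl1b.2, sq_nonneg (nCirc 0.107)]
          · rw [if_neg hx3]
            by_cases hx4 : ν ≤ nBar 0.107
            · rw [if_pos hx4]; linarith [hnBarb.1]
            · rw [if_neg hx4]; norm_num
    nlinarith [hxle, h0, h1, pms_ge_line ν h0 h1, hl1b.1, hl0b.1]
  · rw [if_neg hb1]
    by_cases hb2 : ν ≤ nPP 0.107
    · rw [if_pos hb2]
      have hs : Real.sqrt (-(l0 0.107)*ν) ≤ 1 := by
        have h' : Real.sqrt (-(l0 0.107)*ν) ≤ Real.sqrt 1 :=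
          Real.sqrt_le_sqrt (by nlinarith [hl0b.1, hl0b.2, h0, h1])
        simpa using h'
      nlinarith [hnBarb.1, hnBarb.2, hl1b.1, hl1b.2, h0, h1, hs,
        mul_nonneg h0 (by linarith [hnBarb.1, hl1b.1] : (0:ℝ) ≤ nBar 0.107 + l1 0.107 - 1),
        mul_nonneg h0 (by linarith : (0:ℝ) ≤ 1 - ν)]
    · rw [if_neg hb2]
      by_cases hb3 : ν ≤ nBar 0.107
      · rw [if_pos hb3]
        nlinarith [hnStarb.1, hnStarb.2, h0, h1, mul_nonneg h0 (by linarith : (0:ℝ) ≤ 1 - ν),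
          mul_nonneg h0 (by linarith [hnStarb.1] : (0:ℝ) ≤ nStar 0.107)]
      · rw [if_neg hb3]
        nlinarith [hnStarb.1, hnStarb.2, hnBarb.1, hnBarb.2, h0, h1,
          mul_nonneg h0 (by linarith [hnBarb.1, hnStarb.2] : (0:ℝ) ≤ nBar 0.107 - nStar 0.107)]

lemma pms_bound (ν : ℝ) (h0 : 0 ≤ ν) (h1 : ν ≤ 1) : |pms 0.107 ν| ≤ 10 := by
  rw [abs_le]
  refine ⟨?_, pms_le_ten ν h0 h1⟩
  have := pms_ge_line ν h0 h1
  nlinarith [hl1b.1, hl1b.2, hl0b.1, mul_nonneg (by linarith [hl1b.1] : (0:ℝ) ≤ l1 0.107) h0]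

lemma measurable_xs : Measurable (xs 0.107) := by
  unfold xs
  refine Measurable.ite (measurableSet_le measurable_id measurable_const)
    (measurable_const.mul measurable_id) ?_
  refine Measurable.ite (measurableSet_le measurable_id measurable_const)
    (measurable_const.add (measurable_const.div measurable_id)) ?_
  refine Measurable.ite (measurableSet_le measurable_id measurable_const)
    (((measurable_const.mul measurable_id).add measurable_const).add measurable_const) ?_
  exact Measurable.ite (measurableSet_le measurable_id measurable_const)
    ((measurable_id.sub measurable_const).add measurable_const) measurable_const

lemma measurable_pms : Measurable (pms 0.107) := by
  unfold pms
  refine Measurable.ite (measurableSet_le measurable_id measurable_const)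
    (measurable_id.mul measurable_xs) ?_
  refine Measurable.ite (measurableSet_le measurable_id measurable_const)
    ((measurable_id.mul (((measurable_id.sub measurable_const).add measurable_const).sub
      measurable_const)).add (measurable_const.mul
      (Real.continuous_sqrt.measurable.comp (measurable_const.mul measurable_id)))) ?_
  exact Measurable.ite (measurableSet_le measurable_id measurable_const)
    ((measurable_id.mul (measurable_id.sub measurable_const)).add measurable_const)
    ((measurable_id.mul measurable_const).add measurable_const)

lemma integrable_dirac' (f : ℝ → ℝ) (a : ℝ) : Integrable f (Measure.dirac a) := by
  have h : f =ᵐ[Measure.dirac a] fun _ => f a := by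
    rw [Filter.EventuallyEq, MeasureTheory.ae_dirac_eq]
    exact Filter.eventually_pure.2 rfl
  exact (integrable_const (f a)).congr h.symm

def mix2 (θ x y : ℝ) : Measure ℝ :=
  ENNReal.ofReal θ • Measure.dirac x + ENNReal.ofReal (1-θ) • Measure.dirac y

lemma integral_mix2 (f : ℝ → ℝ) (θ x y : ℝ) (h0 : 0 ≤ θ) (h1 : θ ≤ 1) :
    ∫ ν, f ν ∂(mix2 θ x y) = θ * f x + (1-θ) * f y := by
  rw [mix2, integral_add_measure ((integrable_dirac' f x).smul_measure ENNReal.ofReal_ne_top)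
    ((integrable_dirac' f y).smul_measure ENNReal.ofReal_ne_top),
    integral_smul_measure, integral_smul_measure, integral_dirac, integral_dirac,
    ENNReal.toReal_ofReal h0, ENNReal.toReal_ofReal (by linarith : (0:ℝ) ≤ 1-θ),
    smul_eq_mul, smul_eq_mul]

lemma memAmb_mix2 (θ x y : ℝ) (h0 : 0 ≤ θ) (h1 : θ ≤ 1)
    (hx : x ∈ Icc (0:ℝ) 1) (hy : y ∈ Icc (0:ℝ) 1) :
    MemAmb (θ*x + (1-θ)*y) (mix2 θ x y) := by
  have hm : MeasurableSet ((Icc (0:ℝ) 1)ᶜ) := measurableSet_Icc.compl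
  refine ⟨⟨⟨?_⟩, ?_⟩, ?_⟩
  · rw [mix2, Measure.add_apply, Measure.smul_apply, Measure.smul_apply,
      Measure.dirac_apply' _ MeasurableSet.univ, Measure.dirac_apply' _ MeasurableSet.univ]
    simp only [Set.indicator_univ, Pi.one_apply, smul_eq_mul, mul_one]
    rw [← ENNReal.ofReal_add h0 (by linarith)]
    norm_num
  · rw [mix2, Measure.add_apply, Measure.smul_apply, Measure.smul_apply,
      Measure.dirac_apply' _ hm, Measure.dirac_apply' _ hm,
      Set.indicator_of_notMem (by simp [hx]) _, Set.indicator_of_notMem (by simp [hy]) _]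
    simp
  · exact integral_mix2 (fun ν => ν) θ x y h0 h1

lemma memAmb_dirac (x : ℝ) (hx : x ∈ Icc (0:ℝ) 1) : MemAmb x (Measure.dirac x) := by
  have hm : MeasurableSet ((Icc (0:ℝ) 1)ᶜ) := measurableSet_Icc.compl
  refine ⟨⟨inferInstance, ?_⟩, ?_⟩
  · rw [Measure.dirac_apply' _ hm, Set.indicator_of_notMem (by simp [hx]) _]
  · exact integral_dirac (fun ν => ν) x

def mix3 (w1 w2 a b c : ℝ) : Measure ℝ :=
  ENNReal.ofReal w1 • Measure.dirac a +
    (ENNReal.ofReal w2 • Measure.dirac b + ENNReal.ofReal (1-w1-w2) • Measure.dirac c)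

lemma integral_mix3 (f : ℝ → ℝ) (w1 w2 a b c : ℝ) (h1 : 0 ≤ w1) (h2 : 0 ≤ w2)
    (h3 : w1 + w2 ≤ 1) :
    ∫ ν, f ν ∂(mix3 w1 w2 a b c) = w1 * f a + (w2 * f b + (1-w1-w2) * f c) := by
  rw [mix3, integral_add_measure ((integrable_dirac' f a).smul_measure ENNReal.ofReal_ne_top)
    (((integrable_dirac' f b).smul_measure ENNReal.ofReal_ne_top).add_measure
      ((integrable_dirac' f c).smul_measure ENNReal.ofReal_ne_top)),
    integral_add_measure ((integrable_dirac' f b).smul_measure ENNReal.ofReal_ne_top)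
      ((integrable_dirac' f c).smul_measure ENNReal.ofReal_ne_top),
    integral_smul_measure, integral_smul_measure, integral_smul_measure,
    integral_dirac, integral_dirac, integral_dirac,
    ENNReal.toReal_ofReal h1, ENNReal.toReal_ofReal h2,
    ENNReal.toReal_ofReal (by linarith : (0:ℝ) ≤ 1-w1-w2),
    smul_eq_mul, smul_eq_mul, smul_eq_mul]

lemma memAmb_mix3 (w1 w2 a b c : ℝ) (h1 : 0 ≤ w1) (h2 : 0 ≤ w2) (h3 : w1 + w2 ≤ 1)
    (ha : a ∈ Icc (0:ℝ) 1) (hb : b ∈ Icc (0:ℝ) 1) (hc : c ∈ Icc (0:ℝ) 1) :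
    MemAmb (w1*a + (w2*b + (1-w1-w2)*c)) (mix3 w1 w2 a b c) := by
  have hm : MeasurableSet ((Icc (0:ℝ) 1)ᶜ) := measurableSet_Icc.compl
  refine ⟨⟨⟨?_⟩, ?_⟩, ?_⟩
  · rw [mix3, Measure.add_apply, Measure.add_apply, Measure.smul_apply, Measure.smul_apply,
      Measure.smul_apply, Measure.dirac_apply' _ MeasurableSet.univ,
      Measure.dirac_apply' _ MeasurableSet.univ, Measure.dirac_apply' _ MeasurableSet.univ]
    simp only [Set.indicator_univ, Pi.one_apply, smul_eq_mul, mul_one]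
    rw [← ENNReal.ofReal_add h2 (by linarith), ← ENNReal.ofReal_add h1 (by linarith)]
    norm_num
  · rw [mix3, Measure.add_apply, Measure.add_apply, Measure.smul_apply, Measure.smul_apply,
      Measure.smul_apply, Measure.dirac_apply' _ hm, Measure.dirac_apply' _ hm,
      Measure.dirac_apply' _ hm, Set.indicator_of_notMem (by simp [ha]) _,
      Set.indicator_of_notMem (by simp [hb]) _, Set.indicator_of_notMem (by simp [hc]) _]
    simp
  · exact integral_mix3 (fun ν => ν) w1 w2 a b c h1 h2 h3

end AppMech
namespace AppMech

lemma ae_Icc {P : Measure ℝ} (hnull : P (Set.Icc (0:ℝ) 1)ᶜ = 0) :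
    ∀ᵐ ν ∂P, ν ∈ Icc (0:ℝ) 1 := by
  rw [MeasureTheory.ae_iff]
  convert hnull using 2
  rfl

lemma integral_ge_line {μ : ℝ} {P : Measure ℝ} (hP : MemAmb μ P) (α β : ℝ)
    (h : ∀ ν : ℝ, 0 ≤ ν → ν ≤ 1 → α*ν + β ≤ pms 0.107 ν) :
    α*μ + β ≤ ∫ ν, pms 0.107 ν ∂P := by
  obtain ⟨⟨hprob, hnull⟩, hmean⟩ := hP
  haveI := hprob
  have hae := ae_Icc hnull
  have hint_p : Integrable (fun ν => pms 0.107 ν) P := by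
    refine Integrable.mono' (integrable_const 10) measurable_pms.aestronglyMeasurable ?_
    exact hae.mono fun ν hν => by rw [Real.norm_eq_abs]; exact pms_bound ν hν.1 hν.2
  have hint_id : Integrable (fun ν : ℝ => ν) P := by
    refine Integrable.mono' (integrable_const 1) measurable_id.aestronglyMeasurable ?_
    exact hae.mono fun ν hν => by
      rw [Real.norm_eq_abs, abs_le]; exact ⟨by linarith [hν.1], hν.2⟩
  have hint_line : Integrable (fun ν : ℝ => α*ν + β) P :=
    (hint_id.const_mul α).add (integrable_const β)
  have h2 : ∫ ν, (α*ν+β) ∂P ≤ ∫ ν, pms 0.107 ν ∂P :=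
    integral_mono_ae hint_line hint_p (hae.mono fun ν hν => h ν hν.1 hν.2)
  calc α*μ+β = ∫ ν, (α*ν+β) ∂P := by
        rw [integral_add (hint_id.const_mul α) (integrable_const β), integral_const_mul,
          hmean, integral_const, probReal_univ, smul_eq_mul, one_mul]
  _ ≤ _ := h2

lemma worstCase_low (μ : ℝ) (h0 : 0 < μ) (hμ : μ ≤ nLow 0.107) :
    worstCase μ (pms 0.107) = μ * xs 0.107 μ := by
  set c := -(l0 0.107/(nLow 0.107)^2) with hcdef
  have hxs : xs 0.107 μ = c * μ := by rw [xs, if_pos hμ]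
  have hval : pms 0.107 μ = c*μ^2 := pms_eval_low μ hμ
  have hmemIcc : μ ∈ Icc (0:ℝ) 1 := ⟨h0.le, by linarith [hnLowb.2]⟩
  have hmem : c*μ^2 ∈ {v : ℝ | ∃ P : Measure ℝ, MemAmb μ P ∧ v = ∫ ν, pms 0.107 ν ∂P} :=
    ⟨Measure.dirac μ, memAmb_dirac μ hmemIcc, by rw [integral_dirac, hval]⟩
  have hlb : ∀ v ∈ {v : ℝ | ∃ P : Measure ℝ, MemAmb μ P ∧ v = ∫ ν, pms 0.107 ν ∂P},
      c*μ^2 ≤ v := by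
    rintro v ⟨P, hP, rfl⟩
    have h := integral_ge_line hP (2*c*μ) (-(c*μ^2)) (fun ν ha hb => by
      have := pms_ge_tangent μ ν h0.le hμ ha hb
      rw [← hcdef] at this
      nlinarith [this])
    nlinarith [h]
  rw [worstCase, hxs, show μ*(c*μ) = c*μ^2 by ring]
  exact le_antisymm (csInf_le ⟨c*μ^2, fun v hv => hlb v hv⟩ hmem) (le_csInf ⟨_, hmem⟩ hlb)

lemma worstCase_high (μ : ℝ) (hμ1 : nLow 0.107 ≤ μ) (hμ2 : μ < 0.107) :
    worstCase μ (pms 0.107) = l1 0.107 * μ + l0 0.107 := by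
  set ν₀ : ℝ := SS^2 + SS with hn0def
  have hn0a : 0.2293 < ν₀ := hnu0b.1
  have hn0b : ν₀ < 0.2294 := hnu0b.2
  have hgap : (0:ℝ) < ν₀ - nLow 0.107 := by linarith [hnLowb.2]
  set θ : ℝ := (ν₀ - μ)/(ν₀ - nLow 0.107) with hθdef
  have hθ0 : 0 ≤ θ := div_nonneg (by linarith) hgap.le
  have hθ1 : θ ≤ 1 := by
    rw [hθdef, div_le_one hgap]; linarith
  have hmean : θ*(nLow 0.107) + (1-θ)*ν₀ = μ := by
    rw [hθdef]; field_simp; ring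
  have hP : MemAmb μ (mix2 θ (nLow 0.107) ν₀) := by
    have := memAmb_mix2 θ (nLow 0.107) ν₀ hθ0 hθ1
      ⟨hL0.le, by linarith [hnLowb.2]⟩ ⟨by linarith, by linarith⟩
    rwa [hmean] at this
  have hval : ∫ ν, pms 0.107 ν ∂(mix2 θ (nLow 0.107) ν₀) = l1 0.107 * μ + l0 0.107 := by
    have hpn : pms 0.107 ν₀ = l1 0.107 * ν₀ + l0 0.107 := by
      rw [hn0def]; exact pms_at_nu0
    rw [integral_mix2 _ _ _ _ hθ0 hθ1, pms_at_nLow, hpn]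
    linear_combination (l1 0.107) * hmean
  have hmem : l1 0.107 * μ + l0 0.107 ∈
      {v : ℝ | ∃ P : Measure ℝ, MemAmb μ P ∧ v = ∫ ν, pms 0.107 ν ∂P} :=
    ⟨mix2 θ (nLow 0.107) ν₀, hP, hval.symm⟩
  have hlb : ∀ v ∈ {v : ℝ | ∃ P : Measure ℝ, MemAmb μ P ∧ v = ∫ ν, pms 0.107 ν ∂P},
      l1 0.107 * μ + l0 0.107 ≤ v := by
    rintro v ⟨P, hPP, rfl⟩
    exact integral_ge_line hPP (l1 0.107) (l0 0.107) (fun ν ha hb => pms_ge_line ν ha hb)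
  rw [worstCase]
  exact le_antisymm (csInf_le ⟨_, fun v hv => hlb v hv⟩ hmem) (le_csInf ⟨_, hmem⟩ hlb)

end AppMech
namespace AppMech

lemma bBound_pos (μ : ℝ) (h0 : 0 < μ) (h1 : μ < 0.107) : 0 < bBound μ := by
  rw [bBound]
  apply lt_min
  · exact div_pos h0 (by linarith)
  · have hs := Real.sqrt_nonneg (μ/(3-μ))
    positivity

lemma three_point (x p : ℝ → ℝ) (hF : Feasible x p) (μ s' : ℝ) (h0 : 0 < μ)
    (hs'0 : 0 < s') (hs'u : s' < 0.2) (hmu3 : μ*(1+s'^2) = 3*s'^2) :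
    ∃ P : Measure ℝ, MemAmb μ P ∧ ∫ ν, p ν ∂P ≤ (μ/3)*(s'+1)^2 := by
  have h1Icc : (1:ℝ) ∈ Icc (0:ℝ) 1 := by norm_num
  have hD0 : (0:ℝ) < (1+s'^2)*(s'+1) := by nlinarith
  have hwA0 : (0:ℝ) ≤ 1/((1+s'^2)*(s'+1)) := by positivity
  have hwB0 : (0:ℝ) ≤ s'/((1+s'^2)*(s'+1)) := by positivity
  have hA0 : (0:ℝ) < s'^2*(s'+1) := by positivity
  have hB0 : (0:ℝ) ≤ s'^2+s' := by positivity
  have hB1 : s'^2+s' ≤ 1 := by nlinarith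
  have hAB : s'^2*(s'+1) ≤ s'^2+s' := by nlinarith
  have hAIcc : s'^2*(s'+1) ∈ Icc (0:ℝ) 1 := ⟨hA0.le, le_trans hAB hB1⟩
  have hBIcc : s'^2+s' ∈ Icc (0:ℝ) 1 := ⟨hB0, hB1⟩
  have hthird : 1 - 1/((1+s'^2)*(s'+1)) - s'/((1+s'^2)*(s'+1)) = μ/3 := by
    field_simp
    linear_combination (-(s'+1)) * hmu3
  have hsum : 1/((1+s'^2)*(s'+1)) + s'/((1+s'^2)*(s'+1)) ≤ 1 := by
    linarith [hthird, h0]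
  have hkA : (1/((1+s'^2)*(s'+1)))*(s'^2*(s'+1)) = μ/3 := by
    field_simp
    linear_combination -hmu3
  have hkB : (s'/((1+s'^2)*(s'+1)))*(s'^2+s') = μ/3 := by
    field_simp
    linear_combination -hmu3
  have hkBA : (s'/((1+s'^2)*(s'+1)))*(s'^2*(s'+1)) = (μ/3)*s' := by
    field_simp
    linear_combination -hmu3
  have hmean2 : (1/((1+s'^2)*(s'+1)))*(s'^2*(s'+1)) + ((s'/((1+s'^2)*(s'+1)))*(s'^2+s')
      + (1 - 1/((1+s'^2)*(s'+1)) - s'/((1+s'^2)*(s'+1)))*1) = μ := by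
    rw [hkA, hkB, hthird]; ring
  refine ⟨mix3 (1/((1+s'^2)*(s'+1))) (s'/((1+s'^2)*(s'+1))) (s'^2*(s'+1)) (s'^2+s') 1, ?_, ?_⟩
  · have := memAmb_mix3 _ _ _ _ _ hwA0 hwB0 hsum hAIcc hBIcc h1Icc
    rwa [hmean2] at this
  · rw [integral_mix3 p _ _ _ _ _ hwA0 hwB0 hsum]
    have e1 : (1/((1+s'^2)*(s'+1)))*p (s'^2*(s'+1))
        ≤ (1/((1+s'^2)*(s'+1)))*((s'^2*(s'+1))*x (s'^2*(s'+1))) :=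
      mul_le_mul_of_nonneg_left (hF.ir _ hAIcc) hwA0
    have e1' : (1/((1+s'^2)*(s'+1)))*((s'^2*(s'+1))*x (s'^2*(s'+1)))
        = (μ/3)*x (s'^2*(s'+1)) := by rw [← mul_assoc, hkA]
    have e2 : (s'/((1+s'^2)*(s'+1)))*p (s'^2+s')
        ≤ (s'/((1+s'^2)*(s'+1)))*((s'^2+s')*(x (s'^2+s') - x (s'^2*(s'+1))) + s'^2*(s'+1)) :=
      mul_le_mul_of_nonneg_left (hF.ic _ hBIcc _ hAIcc) hwB0
    have e2' : (s'/((1+s'^2)*(s'+1)))*((s'^2+s')*(x (s'^2+s') - x (s'^2*(s'+1))) + s'^2*(s'+1))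
        = (μ/3)*x (s'^2+s') - (μ/3)*x (s'^2*(s'+1)) + (μ/3)*s' := by
      linear_combination (x (s'^2+s') - x (s'^2*(s'+1))) * hkB + hkBA
    have e3 : (1 - 1/((1+s'^2)*(s'+1)) - s'/((1+s'^2)*(s'+1)))*p 1
        ≤ (1 - 1/((1+s'^2)*(s'+1)) - s'/((1+s'^2)*(s'+1)))*(1*(x 1 - x (s'^2+s')) + (s'^2+s')) :=
      mul_le_mul_of_nonneg_left (hF.ic 1 h1Icc _ hBIcc) (by rw [hthird]; positivity)
    have e3' : (1 - 1/((1+s'^2)*(s'+1)) - s'/((1+s'^2)*(s'+1)))*(1*(x 1 - x (s'^2+s')) + (s'^2+s'))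
        = (μ/3)*x 1 - (μ/3)*x (s'^2+s') + (μ/3)*(s'^2+s') := by rw [hthird]; ring
    have e4 : (μ/3)*x 1 ≤ μ/3 := by nlinarith [(hF.x_mem 1 h1Icc).2, h0]
    have e5 : μ/3 + (μ/3)*s' + (μ/3)*(s'^2+s') = (μ/3)*(s'+1)^2 := by ring
    linarith [e1, e1', e2, e2', e3, e3', e4, e5]

lemma worstCase_le_bBound (μ : ℝ) (h0 : 0 < μ) (h1 : μ < 0.107) {x p : ℝ → ℝ}
    (hF : Feasible x p) : worstCase μ p ≤ bBound μ := by
  have h1Icc : (1:ℝ) ∈ Icc (0:ℝ) 1 := by norm_num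
  -- two-point distribution
  set q : ℝ := μ/(2-μ) with hqdef
  have h2μ : (0:ℝ) < 2-μ := by linarith
  have hq0 : 0 < q := div_pos h0 h2μ
  have hq1 : q < 1 := by rw [hqdef, div_lt_one h2μ]; linarith
  have hqIcc : q ∈ Icc (0:ℝ) 1 := ⟨hq0.le, hq1.le⟩
  have hβ0 : (0:ℝ) ≤ 1-μ/2 := by linarith
  have hβ1 : (1:ℝ)-μ/2 ≤ 1 := by linarith
  have hq : q*(2-μ) = μ := by rw [hqdef]; field_simp
  have hmean1 : (1-μ/2)*q + (1-(1-μ/2))*1 = μ := by linear_combination hq/2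
  have hP1 : MemAmb μ (mix2 (1-μ/2) q 1) := by
    have := memAmb_mix2 (1-μ/2) q 1 hβ0 hβ1 hqIcc h1Icc
    rwa [hmean1] at this
  have hv1 : ∫ ν, p ν ∂(mix2 (1-μ/2) q 1) = (1-μ/2)*p q + (1-(1-μ/2))*p 1 :=
    integral_mix2 p _ _ _ hβ0 hβ1
  have hb1 : (1-μ/2)*p q + (1-(1-μ/2))*p 1 ≤ q := by
    have hpq := hF.ir q hqIcc
    have hp1 := hF.ic 1 h1Icc q hqIcc
    have hxq := hF.x_mem q hqIcc
    have hx1 := hF.x_mem 1 h1Icc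
    have hbq : (1-μ/2)*q = μ/2 := by linear_combination hq/2
    have e1 : (1-μ/2)*p q ≤ (1-μ/2)*(q*x q) := mul_le_mul_of_nonneg_left hpq hβ0
    have e1' : (1-μ/2)*(q*x q) = (μ/2)*x q := by rw [← mul_assoc, hbq]
    have e2 : (1-(1-μ/2))*p 1 ≤ (1-(1-μ/2))*(1*(x 1 - x q)+q) :=
      mul_le_mul_of_nonneg_left hp1 (by linarith)
    have e4 : (μ/2)*x 1 ≤ μ/2 := by nlinarith [hx1.2, h0]
    nlinarith [e1, e1', e2, e4, hq]
  -- three-point distribution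
  have h3μ : (0:ℝ) < 3-μ := by linarith
  have hs'0 : 0 < Real.sqrt (μ/(3-μ)) := Real.sqrt_pos.2 (div_pos h0 h3μ)
  have hs'sq : (Real.sqrt (μ/(3-μ)))^2*(3-μ) = μ := by
    rw [Real.sq_sqrt (div_pos h0 h3μ).le]; field_simp
  have hs'u : Real.sqrt (μ/(3-μ)) < 0.2 := by nlinarith [hs'sq, hs'0, h0, h1, h3μ]
  have hmu3 : μ*(1+(Real.sqrt (μ/(3-μ)))^2) = 3*(Real.sqrt (μ/(3-μ)))^2 := by
    nlinarith [hs'sq]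
  obtain ⟨P2, hP2, hb2⟩ := three_point x p hF μ (Real.sqrt (μ/(3-μ))) h0 hs'0 hs'u hmu3
  -- conclude
  rw [worstCase]
  by_cases hbd : BddBelow {v : ℝ | ∃ P : Measure ℝ, MemAmb μ P ∧ v = ∫ ν, p ν ∂P}
  · apply le_min
    · calc sInf {v : ℝ | ∃ P : Measure ℝ, MemAmb μ P ∧ v = ∫ ν, p ν ∂P}
          ≤ ∫ ν, p ν ∂(mix2 (1-μ/2) q 1) := csInf_le hbd ⟨_, hP1, rfl⟩
      _ = (1-μ/2)*p q + (1-(1-μ/2))*p 1 := hv1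
      _ ≤ q := hb1
    · calc sInf {v : ℝ | ∃ P : Measure ℝ, MemAmb μ P ∧ v = ∫ ν, p ν ∂P}
          ≤ ∫ ν, p ν ∂P2 := csInf_le hbd ⟨_, hP2, rfl⟩
      _ ≤ (μ/3)*(Real.sqrt (μ/(3-μ))+1)^2 := hb2
  · rw [Real.sInf_of_not_bddBelow hbd]
    exact (bBound_pos μ h0 h1).le

lemma zStar_le_bBound (μ : ℝ) (h0 : 0 < μ) (h1 : μ < 0.107) : zStar μ ≤ bBound μ := by
  rw [zStar]
  apply Real.sSup_le
  · rintro z ⟨x, p, hF, rfl⟩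
    exact worstCase_le_bBound μ h0 h1 hF
  · exact (bBound_pos μ h0 h1).le

end AppMech

/-- Fix `μ* = 0.107` and consider the maximal-payment mechanism
`(x^s, p_m^s)` defined from `μ*`. For every `μ ∈ (0, 0.107)`: (i) the worst-case expected
payment of `(x^s, p_m^s)` over `P_μ` equals `μ·x^s(μ)` if `μ ≤ ν̲` and `λ₁μ + λ₀` if
`ν̲ ≤ μ`; (ii) `z*(μ) ≤ b(μ)`; hence the relative and absolute performance guarantees
`z_{μ*} ≥ (z_{μ*}/b(μ))·z*(μ)` and `z_{μ*} ≥ z*(μ) − (b(μ) − z_{μ*})` hold. -/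
theorem approximation_mechanism_guarantees
    (μ : ℝ) (hμ : μ ∈ Set.Ioo (0:ℝ) 0.107) :
    ((μ ≤ nLow 0.107 → worstCase μ (pms 0.107) = μ * xs 0.107 μ) ∧
     (nLow 0.107 ≤ μ → worstCase μ (pms 0.107) = l1 0.107 * μ + l0 0.107)) ∧
    zStar μ ≤ bBound μ ∧
    worstCase μ (pms 0.107) ≥ (worstCase μ (pms 0.107)/bBound μ) * zStar μ ∧
    worstCase μ (pms 0.107) ≥ zStar μ - (bBound μ - worstCase μ (pms 0.107)) := by
  obtain ⟨h0, h1⟩ := hμ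
  have hzb := AppMech.zStar_le_bBound μ h0 h1
  have hb := AppMech.bBound_pos μ h0 h1
  have hz0 : 0 ≤ worstCase μ (pms 0.107) := by
    rcases le_total μ (nLow 0.107) with hc | hc
    · rw [AppMech.worstCase_low μ h0 hc, xs, if_pos hc]
      have hc0 : 0 ≤ -(l0 0.107/(nLow 0.107)^2) := by
        have h' : -(l0 0.107/(nLow 0.107)^2) = (-l0 0.107)/(nLow 0.107)^2 := by ring
        rw [h']; exact div_nonneg (by linarith [AppMech.hl0neg]) (sq_nonneg _)
      exact mul_nonneg h0.le (mul_nonneg hc0 h0.le)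
    · rw [AppMech.worstCase_high μ hc h1]
      nlinarith [AppMech.hnLowe, AppMech.hl1pos, AppMech.hl0neg,
        mul_le_mul_of_nonneg_left hc AppMech.hl1pos.le]
  refine ⟨⟨fun hle => AppMech.worstCase_low μ h0 hle,
    fun hge => AppMech.worstCase_high μ hge h1⟩, hzb, ?_, ?_⟩
  · have : (worstCase μ (pms 0.107)/bBound μ) * zStar μ
        ≤ (worstCase μ (pms 0.107)/bBound μ) * bBound μ :=
      mul_le_mul_of_nonneg_left hzb (div_nonneg hz0 hb.le)
    rw [div_mul_cancel₀ _ hb.ne'] at this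
    exact this
  · linarith [hzb]


end
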